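/- Let ρ : S¹ → [0, π/2] be a measurable even function (radial function of an origin-symmetric star-shaped set K in S²₊). Then 4∫_{S¹} ρ(u)² du ≤ π² ∫_{S¹} (1 − cos ρ(u)) du, with equality if and only if ρ(u) ∈ {0, π/2} for almost every u. -/

import Mathlib

open Real MeasureTheory

/-- Chord inequality for `sin` at half-angle on `[0, π/2]`. -/
lemma chord_le {x : ℝ} (h0 : 0 ≤ x) (h1 : x ≤ π / 2) :
    Real.sqrt 2 * x / π ≤ Real.sin (x / 2) := by
  have hπ : 0 < π := Real.pi_pos
  set s : ℝ := 2 * x / π with hs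
  have hs0 : 0 ≤ s := by positivity
  have hs1 : s ≤ 1 := by
    rw [hs, div_le_one hπ]; linarith
  have hmem0 : (0 : ℝ) ∈ Set.Icc (0 : ℝ) π := ⟨le_rfl, hπ.le⟩
  have hmemq : (π / 4 : ℝ) ∈ Set.Icc (0 : ℝ) π := ⟨by positivity, by linarith⟩
  have := strictConcaveOn_sin_Icc.concaveOn.2 hmem0 hmemq
      (by linarith : (0:ℝ) ≤ 1 - s) hs0 (by ring)
  have ht : (1 - s) • (0:ℝ) + s • (π / 4) = x / 2 := by
    rw [smul_eq_mul, smul_eq_mul, hs]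
    field_simp
    ring
  rw [ht, Real.sin_zero, smul_zero, zero_add, smul_eq_mul, Real.sin_pi_div_four, hs] at this
  calc Real.sqrt 2 * x / π = 2 * x / π * (Real.sqrt 2 / 2) := by ring
    _ ≤ Real.sin (x / 2) := this

/-- Strict chord inequality. -/
lemma chord_lt {x : ℝ} (h0 : 0 < x) (h1 : x < π / 2) :
    Real.sqrt 2 * x / π < Real.sin (x / 2) := by
  have hπ : 0 < π := Real.pi_pos
  set s : ℝ := 2 * x / π with hs
  have hs0 : 0 < s := by positivity
  have hs1 : s < 1 := by
    rw [hs, div_lt_one hπ]; linarith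
  have hmem0 : (0 : ℝ) ∈ Set.Icc (0 : ℝ) π := ⟨le_rfl, hπ.le⟩
  have hmemq : (π / 4 : ℝ) ∈ Set.Icc (0 : ℝ) π := ⟨by positivity, by linarith⟩
  have := strictConcaveOn_sin_Icc.2 hmem0 hmemq
      (by positivity : (0:ℝ) < π / 4).ne (by linarith : (0:ℝ) < 1 - s) hs0 (by ring)
  have ht : (1 - s) • (0:ℝ) + s • (π / 4) = x / 2 := by
    rw [smul_eq_mul, smul_eq_mul, hs]
    field_simp
    ring
  rw [ht, Real.sin_zero, smul_zero, zero_add, smul_eq_mul, Real.sin_pi_div_four, hs] at this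
  calc Real.sqrt 2 * x / π = 2 * x / π * (Real.sqrt 2 / 2) := by ring
    _ < Real.sin (x / 2) := this

lemma one_sub_cos (x : ℝ) : 1 - Real.cos x = 2 * Real.sin (x / 2) ^ 2 := by
  have h1 := Real.cos_two_mul' (x / 2)
  have h2 := Real.sin_sq_add_cos_sq (x / 2)
  rw [show 2 * (x / 2) = x by ring] at h1
  nlinarith

/-- Key pointwise inequality. -/
lemma key_le {x : ℝ} (h0 : 0 ≤ x) (h1 : x ≤ π / 2) :
    4 * x ^ 2 ≤ π ^ 2 * (1 - Real.cos x) := by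
  have hπ : 0 < π := Real.pi_pos
  have hc := chord_le h0 h1
  have h2 : (Real.sqrt 2) ^ 2 = 2 := Real.sq_sqrt (by norm_num)
  have hnn : 0 ≤ Real.sqrt 2 * x / π := by positivity
  have hsq : (Real.sqrt 2 * x / π) ^ 2 ≤ Real.sin (x / 2) ^ 2 :=
    pow_le_pow_left₀ hnn hc 2
  rw [one_sub_cos]
  rw [div_pow, mul_pow, h2] at hsq
  have hπ2 : 0 < π ^ 2 := by positivity
  calc 4 * x ^ 2 = 2 * π ^ 2 * (2 * x ^ 2 / π ^ 2) := by field_simp; ring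
    _ ≤ 2 * π ^ 2 * Real.sin (x / 2) ^ 2 := by
        apply mul_le_mul_of_nonneg_left hsq (by positivity)
    _ = π ^ 2 * (2 * Real.sin (x / 2) ^ 2) := by ring

/-- Key equality case. -/
lemma key_eq {x : ℝ} (h0 : 0 ≤ x) (h1 : x ≤ π / 2)
    (h : 4 * x ^ 2 = π ^ 2 * (1 - Real.cos x)) : x = 0 ∨ x = π / 2 := by
  by_contra hcon
  push_neg at hcon
  obtain ⟨hne0, hnep⟩ := hcon
  have hx0 : 0 < x := lt_of_le_of_ne h0 (Ne.symm hne0)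
  have hxπ : x < π / 2 := lt_of_le_of_ne h1 hnep
  have hπ : 0 < π := Real.pi_pos
  have hc := chord_lt hx0 hxπ
  have h2 : (Real.sqrt 2) ^ 2 = 2 := Real.sq_sqrt (by norm_num)
  have hnn : 0 ≤ Real.sqrt 2 * x / π := by positivity
  have hsq : (Real.sqrt 2 * x / π) ^ 2 < Real.sin (x / 2) ^ 2 := by
    apply pow_lt_pow_left₀ hc hnn
    norm_num
  rw [div_pow, mul_pow, h2] at hsq
  rw [one_sub_cos] at h
  have hπ2 : 0 < π ^ 2 := by positivity
  have : 4 * x ^ 2 < π ^ 2 * (2 * Real.sin (x / 2) ^ 2) := by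
    calc 4 * x ^ 2 = 2 * π ^ 2 * (2 * x ^ 2 / π ^ 2) := by field_simp; ring
      _ < 2 * π ^ 2 * Real.sin (x / 2) ^ 2 :=
          mul_lt_mul_of_pos_left hsq (by positivity)
      _ = π ^ 2 * (2 * Real.sin (x / 2) ^ 2) := by ring
  linarith

/-- For a measurable even radial function `ρ : S¹ → [0, π/2]` (modeled as a measurable
`π`-periodic function on `ℝ`), `4∫_{S¹} ρ² ≤ π² ∫_{S¹} (1 − cos ρ)`, with equality iff
`ρ ∈ {0, π/2}` almost everywhere (i.e. `K` is a spherical cone). -/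
theorem stmt15 (ρ : ℝ → ℝ) (hρm : Measurable ρ)
    (hρr : ∀ θ, ρ θ ∈ Set.Icc 0 (π / 2))
    (hsym : ∀ θ, ρ (θ + π) = ρ θ) :
    4 * (∫ θ in (0:ℝ)..(2 * π), (ρ θ) ^ 2) ≤
        π ^ 2 * ∫ θ in (0:ℝ)..(2 * π), (1 - Real.cos (ρ θ)) ∧
      (4 * (∫ θ in (0:ℝ)..(2 * π), (ρ θ) ^ 2) =
          π ^ 2 * ∫ θ in (0:ℝ)..(2 * π), (1 - Real.cos (ρ θ)) ↔
        ∀ᵐ θ ∂(volume.restrict (Set.Ioc 0 (2 * π))), ρ θ = 0 ∨ ρ θ = π / 2) := by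
  have hπ : 0 < π := Real.pi_pos
  have h02 : (0:ℝ) ≤ 2 * π := by linarith
  have hfin : volume (Set.Ioc (0:ℝ) (2 * π)) < ⊤ := measure_Ioc_lt_top
  -- integrability
  have hInt1 : IntegrableOn (fun θ => (ρ θ) ^ 2) (Set.Ioc 0 (2 * π)) := by
    refine (integrableOn_const hfin.ne :
        IntegrableOn (fun _ => (π / 2) ^ 2) _ _).mono'
      ((hρm.pow_const 2).aestronglyMeasurable) (ae_of_all _ fun θ => ?_)
    have h := hρr θ
    rw [Real.norm_eq_abs, abs_of_nonneg (by positivity)]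
    exact pow_le_pow_left₀ h.1 h.2 2
  have hInt2 : IntegrableOn (fun θ => 1 - Real.cos (ρ θ)) (Set.Ioc 0 (2 * π)) := by
    refine (integrableOn_const hfin.ne :
        IntegrableOn (fun _ => (2:ℝ)) _ _).mono'
      ((measurable_const.sub (Real.measurable_cos.comp hρm)).aestronglyMeasurable)
      (ae_of_all _ fun θ => ?_)
    have h1 := Real.cos_le_one (ρ θ)
    have h2 := Real.neg_one_le_cos (ρ θ)
    rw [Real.norm_eq_abs, abs_of_nonneg (by linarith)]
    linarith
  -- the nonnegative difference
  set F : ℝ → ℝ := fun θ => π ^ 2 * (1 - Real.cos (ρ θ)) - 4 * (ρ θ) ^ 2 with hF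
  have hFnn : ∀ θ, 0 ≤ F θ := fun θ => by
    have h := hρr θ
    have := key_le h.1 h.2
    simp only [hF]; linarith
  have hFint : IntegrableOn F (Set.Ioc 0 (2 * π)) :=
    (hInt2.const_mul _).sub (hInt1.const_mul _)
  have hFeq : ∫ θ in Set.Ioc (0:ℝ) (2 * π), F θ =
      π ^ 2 * (∫ θ in Set.Ioc (0:ℝ) (2 * π), (1 - Real.cos (ρ θ))) -
        4 * (∫ θ in Set.Ioc (0:ℝ) (2 * π), (ρ θ) ^ 2) := by
    rw [integral_sub (hInt2.const_mul _) (hInt1.const_mul _),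
      integral_const_mul, integral_const_mul]
  have hrw1 : (∫ θ in (0:ℝ)..(2 * π), (ρ θ) ^ 2) =
      ∫ θ in Set.Ioc (0:ℝ) (2 * π), (ρ θ) ^ 2 := intervalIntegral.integral_of_le h02
  have hrw2 : (∫ θ in (0:ℝ)..(2 * π), (1 - Real.cos (ρ θ))) =
      ∫ θ in Set.Ioc (0:ℝ) (2 * π), (1 - Real.cos (ρ θ)) :=
    intervalIntegral.integral_of_le h02
  have hFnonneg : 0 ≤ ∫ θ in Set.Ioc (0:ℝ) (2 * π), F θ :=
    integral_nonneg hFnn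
  constructor
  · rw [hrw1, hrw2]; linarith
  · rw [hrw1, hrw2]
    have hzero : (∫ θ in Set.Ioc (0:ℝ) (2 * π), F θ) = 0 ↔
        F =ᵐ[volume.restrict (Set.Ioc 0 (2 * π))] 0 :=
      integral_eq_zero_iff_of_nonneg hFnn hFint
    constructor
    · intro h
      have : (∫ θ in Set.Ioc (0:ℝ) (2 * π), F θ) = 0 := by rw [hFeq]; linarith
      filter_upwards [hzero.1 this] with θ hθ
      have h := hρr θ
      refine key_eq h.1 h.2 ?_
      have : F θ = 0 := hθ
      simp only [hF] at this
      linarith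
    · intro h
      have : F =ᵐ[volume.restrict (Set.Ioc 0 (2 * π))] 0 := by
        filter_upwards [h] with θ hθ
        rcases hθ with h0 | hp
        · simp [hF, h0]
        · simp only [hF, hp, Real.cos_pi_div_two, Pi.zero_apply]
          ring
      have := hzero.2 this
      rw [hFeq] at this
      linarith
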